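/- Let S be an action-based randomization mechanism, U an uncertainty measure, and for each prior p and integer l ≥ 1 let M_l(p) denote the maximum of I_σ(S,p) over all strategies σ of length at most l (with M_0(p)=0). Then M_l satisfies the Bellman equation M_l(p) = max_{a∈Act} { I_{[a]}(S,p) + Σ_{y : p_a(y)>0} p_a(y) · M_{l−1}(p^{ay}) }, where p_a(y) = Σ_x p(x)p_a(y|x) and p^{ay}(x) = p(x)p_a(y|x)/p_a(y). In particular, there is an optimal strategy σ* of length l whose first action maximizes the right-hand side and whose y-derivatives are optimal strategies of length l−1 for the posteriors p^{ay}. -/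

import Mathlib

open scoped BigOperators Classical

noncomputable section

variable {X Y A : Type*}

/-- Conditional product of transition probabilities along `ys`, where the action at each
step is chosen by the strategy `σ` applied to the accumulated prefix `pre`
(`0` if the strategy is undefined on some prefix). -/
def likAux (M : A → X → Y → ℝ) (σ : List Y → Option A) (x : X) : List Y → List Y → ℝ
  | _, [] => 1
  | pre, y :: ys => ((σ pre).elim 0 fun a => M a x y) * likAux M σ x (pre ++ [y]) ys

/-- `p_σ(ys | x)`: the probability of the (maximal) observation sequence `ys`
given the secret `x`, under the finite strategy `σ`. A sequence is maximal when its
last proper prefix is in the domain of `σ` but the sequence itself is not. -/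
def condDist (M : A → X → Y → ℝ) (σ : List Y → Option A) (x : X) (ys : List Y) : ℝ :=
  if ys ≠ [] ∧ (σ ys.dropLast).isSome ∧ σ ys = none then likAux M σ x [] ys else 0

/-- joint distribution `p_σ(x, ys)` induced by the prior `p` and the strategy `σ`. -/
def joint (M : A → X → Y → ℝ) (σ : List Y → Option A) (p : X → ℝ) (x : X) (ys : List Y) : ℝ :=
  p x * condDist M σ x ys

/-- marginal `p_σ(ys)` on observation sequences. -/
def obsProb [Fintype X] (M : A → X → Y → ℝ) (σ : List Y → Option A) (p : X → ℝ)
    (ys : List Y) : ℝ :=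
  ∑ x : X, joint M σ p x ys

/-- posterior `p_σ(·|ys)` on secrets. -/
def post [Fintype X] (M : A → X → Y → ℝ) (σ : List Y → Option A) (p : X → ℝ)
    (ys : List Y) : X → ℝ :=
  fun x => joint M σ p x ys / obsProb M σ p ys

/-- conditional uncertainty `U_σ(X|Y) = Σ_{ys : p_σ(ys)>0} p_σ(ys)·U(p_σ(·|ys))`
(terms with `p_σ(ys) = 0` contribute `0`). -/
def condUncert [Fintype X] (U : (X → ℝ) → ℝ) (M : A → X → Y → ℝ) (σ : List Y → Option A)
    (p : X → ℝ) : ℝ :=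
  ∑' ys : List Y, obsProb M σ p ys * U (post M σ p ys)

/-- information leakage `I_σ(S,p) = U(p) − U_σ(X|Y)`. -/
def leak [Fintype X] (U : (X → ℝ) → ℝ) (M : A → X → Y → ℝ) (σ : List Y → Option A)
    (p : X → ℝ) : ℝ :=
  U p - condUncert U M σ p

/-- the domain of a strategy is prefix-closed. -/
def PrefixClosed (σ : List Y → Option A) : Prop :=
  ∀ l l' : List Y, l <+: l' → (σ l').isSome → (σ l).isSome

/-- a finite strategy: nonempty prefix-closed finite domain. -/
def FiniteStrategy (σ : List Y → Option A) : Prop :=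
  (σ []).isSome ∧ PrefixClosed σ ∧ {l : List Y | (σ l).isSome}.Finite

/-- the strategy has length exactly `n` (one plus the maximal length of a sequence
in its domain). -/
def HasLength (σ : List Y → Option A) (n : ℕ) : Prop :=
  (∀ ys, (σ ys).isSome → ys.length + 1 ≤ n) ∧ ∃ ys, (σ ys).isSome ∧ ys.length + 1 = n

/-- the set of actions occurring in a strategy. -/
def rangeActs (σ : List Y → Option A) : Set A :=
  {a | ∃ ys, σ ys = some a}

/-- the non-adaptive (complete) strategy playing the listed actions in order:
the action played only depends on the number of past observations. -/
def ofList (as : List A) : List Y → Option A := fun ys => as[ys.length]?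

/-- an action-based randomization mechanism: each row of each matrix `M_a` is a
probability distribution on observations. -/
def IsMechanism [Fintype Y] (M : A → X → Y → ℝ) : Prop :=
  ∀ a x, M a x ∈ stdSimplex ℝ Y

/-- an uncertainty measure: concave and continuous on the probability simplex. -/
def IsUncertainty [Fintype X] (U : (X → ℝ) → ℝ) : Prop :=
  ConcaveOn ℝ (stdSimplex ℝ X) U ∧ ContinuousOn U (stdSimplex ℝ X)

/-- `p_a(y) = Σ_x p(x)·p_a(y|x)`: probability of observing `y` when playing `a`. -/
def actObs [Fintype X] (M : A → X → Y → ℝ) (p : X → ℝ) (a : A) (y : Y) : ℝ :=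
  ∑ x : X, p x * M a x y

/-- `p^{ay}`: the Bayesian posterior after playing `a` and observing `y`. -/
def bayes [Fintype X] (M : A → X → Y → ℝ) (p : X → ℝ) (a : A) (y : Y) : X → ℝ :=
  fun x => p x * M a x y / actObs M p a y

/-- `M_l(p)`: the maximal leakage over all strategies of length at most `l`
(for `l = 0` the set is empty and `sSup ∅ = 0`, i.e. `M_0(p) = 0`). -/
def maxLeak [Fintype X] (U : (X → ℝ) → ℝ) (M : A → X → Y → ℝ) (p : X → ℝ) (l : ℕ) : ℝ :=
  sSup {r : ℝ | ∃ σ : List Y → Option A,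
    FiniteStrategy σ ∧ (∀ ys, (σ ys).isSome → ys.length + 1 ≤ l) ∧ r = leak U M σ p}



lemma likAux_shift (M : A → X → Y → ℝ) (σ : List Y → Option A) (x : X) (y : Y) :
    ∀ (ys pre : List Y), likAux M σ x (y :: pre) ys = likAux M (fun l => σ (y :: l)) x pre ys
  | [], _ => rfl
  | z :: ys, pre => by
    show ((σ (y :: pre)).elim 0 fun a => M a x z) * likAux M σ x ((y :: pre) ++ [z]) ys = _
    rw [show (y :: pre) ++ [z] = y :: (pre ++ [z]) from rfl,
      likAux_shift M σ x y ys (pre ++ [z])]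
    rfl

lemma condDist_nil (M : A → X → Y → ℝ) (σ : List Y → Option A) (x : X) :
    condDist M σ x [] = 0 := by simp [condDist]

lemma condDist_cons_of_ne (M : A → X → Y → ℝ) (σ : List Y → Option A) (x : X) {a₀ : A}
    (h0 : σ [] = some a₀) (y : Y) {t : List Y} (ht : t ≠ []) :
    condDist M σ x (y :: t) = M a₀ x y * condDist M (fun l => σ (y :: l)) x t := by
  unfold condDist
  rw [List.dropLast_cons_of_ne_nil ht]
  by_cases hc : ((σ (y :: t.dropLast)).isSome ∧ σ (y :: t) = none)
  · rw [if_pos ⟨List.cons_ne_nil _ _, hc.1, hc.2⟩, if_pos ⟨ht, hc.1, hc.2⟩]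
    show ((σ []).elim 0 fun a => M a x y) * likAux M σ x ([] ++ [y]) t = _
    rw [h0]
    show M a₀ x y * likAux M σ x (y :: []) t = _
    rw [likAux_shift]
  · rw [if_neg (by tauto), if_neg (by tauto), mul_zero]

lemma condDist_single (M : A → X → Y → ℝ) (σ : List Y → Option A) (x : X) {a₀ : A}
    (h0 : σ [] = some a₀) (y : Y) :
    condDist M σ x [y] = if σ [y] = none then M a₀ x y else 0 := by
  unfold condDist
  by_cases h : σ [y] = none
  · rw [if_pos ⟨List.cons_ne_nil _ _, by rw [show ([y]:List Y).dropLast = [] from rfl, h0]; rfl, h⟩,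
      if_pos h]
    show ((σ []).elim 0 fun a => M a x y) * 1 = _
    rw [h0]; simp
  · rw [if_neg (by tauto), if_neg h]

lemma condDist_eq_zero_of_long {M : A → X → Y → ℝ} {σ : List Y → Option A} {m : ℕ}
    (hb : ∀ ys : List Y, (σ ys).isSome → ys.length + 1 ≤ m) {ys : List Y}
    (h : ¬ ys.length ≤ m) (x : X) : condDist M σ x ys = 0 := by
  unfold condDist
  rw [if_neg]
  rintro ⟨hne, hs, -⟩
  have h1 := hb _ hs
  have h2 : ys.dropLast.length = ys.length - 1 := List.length_dropLast
  have h3 : ys.length ≠ 0 := fun hh => hne (List.length_eq_zero_iff.1 hh)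
  omega

def listsLE (Y : Type*) [Fintype Y] (n : ℕ) : Finset (List Y) :=
  (List.finite_length_le Y n).toFinset

lemma mem_listsLE [Fintype Y] {n : ℕ} {l : List Y} : l ∈ listsLE Y n ↔ l.length ≤ n :=
  (List.finite_length_le Y n).mem_toFinset

lemma condUncert_eq_sum [Fintype X] [Fintype Y] (U : (X → ℝ) → ℝ) (M : A → X → Y → ℝ)
    (σ : List Y → Option A) (m : ℕ) (hb : ∀ ys : List Y, (σ ys).isSome → ys.length + 1 ≤ m)
    (p : X → ℝ) :
    condUncert U M σ p = ∑ ys ∈ listsLE Y m, obsProb M σ p ys * U (post M σ p ys) := by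
  apply tsum_eq_sum
  intro ys hys
  have hz : obsProb M σ p ys = 0 := Finset.sum_eq_zero fun x _ => by
    rw [joint, condDist_eq_zero_of_long hb (by simpa [mem_listsLE] using hys) x, mul_zero]
  rw [hz, zero_mul]

lemma listsLE_succ [Fintype Y] (n : ℕ) :
    listsLE Y (n + 1) =
      insert ([] : List Y)
        ((Finset.univ ×ˢ listsLE Y n).image fun q : Y × List Y => q.1 :: q.2) := by
  ext l
  simp only [mem_listsLE, Finset.mem_insert, Finset.mem_image, Finset.mem_product]
  cases l with
  | nil => simp
  | cons y t =>
    constructor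
    · intro h
      exact Or.inr ⟨(y, t), ⟨Finset.mem_univ _, by simpa using h⟩, rfl⟩
    · rintro (h | ⟨⟨y', t'⟩, ⟨-, ht'⟩, heq⟩)
      · exact absurd h (List.cons_ne_nil _ _)
      · obtain ⟨rfl, rfl⟩ : y' = y ∧ t' = t := by
          constructor <;> [exact (List.cons_eq_cons.1 heq).1; exact (List.cons_eq_cons.1 heq).2]
        simpa using ht'
lemma actObs_nonneg [Fintype X] [Fintype Y] {M : A → X → Y → ℝ} {p : X → ℝ}
    (hM : IsMechanism M) (hp : ∀ x, 0 ≤ p x) (a : A) (y : Y) : 0 ≤ actObs M p a y :=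
  Finset.sum_nonneg fun x _ => mul_nonneg (hp x) ((hM a x).1 y)

lemma actObs_eq_zero [Fintype X] [Fintype Y] {M : A → X → Y → ℝ} {p : X → ℝ}
    (hM : IsMechanism M) (hp : ∀ x, 0 ≤ p x) {a : A} {y : Y}
    (ha : actObs M p a y = 0) (x : X) : p x * M a x y = 0 :=
  (Finset.sum_eq_zero_iff_of_nonneg fun x _ => mul_nonneg (hp x) ((hM a x).1 y)).1 ha x
    (Finset.mem_univ x)

lemma condUncert_rec [Fintype X] [Fintype Y] (U : (X → ℝ) → ℝ) (M : A → X → Y → ℝ)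
    (hM : IsMechanism M) (σ : List Y → Option A) (a₀ : A) (h0 : σ [] = some a₀)
    (hpc : PrefixClosed σ) (n : ℕ) (hb : ∀ ys : List Y, (σ ys).isSome → ys.length + 1 ≤ n + 1)
    (p : X → ℝ) (hp : ∀ x, 0 ≤ p x) :
    condUncert U M σ p =
      ∑ y : Y, (if (σ [y]).isSome
        then actObs M p a₀ y * condUncert U M (fun t => σ (y :: t)) (bayes M p a₀ y)
        else actObs M p a₀ y * U (bayes M p a₀ y)) := by
  have hinj : ∀ q ∈ Finset.univ ×ˢ listsLE Y n, ∀ q' ∈ Finset.univ ×ˢ listsLE Y n,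
      (fun q : Y × List Y => q.1 :: q.2) q = (fun q : Y × List Y => q.1 :: q.2) q' → q = q' := by
    rintro ⟨y, t⟩ - ⟨y', t'⟩ - h
    obtain ⟨h1, h2⟩ := List.cons_eq_cons.1 h
    exact Prod.ext h1 h2
  have hnil : ([] : List Y) ∉ (Finset.univ ×ˢ listsLE Y n).image fun q : Y × List Y => q.1 :: q.2 := by
    simp
  rw [condUncert_eq_sum U M σ (n+1) hb p, listsLE_succ, Finset.sum_insert hnil,
    Finset.sum_image hinj, Finset.sum_product]
  have hnilterm : obsProb M σ p [] * U (post M σ p []) = 0 := by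
    have : obsProb M σ p [] = 0 :=
      Finset.sum_eq_zero fun x _ => by rw [joint, condDist_nil, mul_zero]
    rw [this, zero_mul]
  rw [hnilterm, zero_add]
  refine Finset.sum_congr rfl fun y _ => ?_
  by_cases hsy : (σ [y]).isSome
  · rw [if_pos hsy]
    have hby : ∀ t : List Y, ((fun t => σ (y :: t)) t).isSome → t.length + 1 ≤ n := by
      intro t ht
      have := hb (y :: t) ht
      simp only [List.length_cons] at this
      omega
    rw [condUncert_eq_sum U M (fun t => σ (y :: t)) n hby (bayes M p a₀ y), Finset.mul_sum]
    refine Finset.sum_congr rfl fun t _ => ?_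
    by_cases ht : t = []
    · subst ht
      have h1 : obsProb M σ p [y] = 0 := Finset.sum_eq_zero fun x _ => by
        rw [joint, condDist_single M σ x h0 y,
          if_neg (Option.ne_none_iff_isSome.2 hsy), mul_zero]
      have h2 : obsProb M (fun t => σ (y :: t)) (bayes M p a₀ y) [] = 0 :=
        Finset.sum_eq_zero fun x _ => by rw [joint, condDist_nil, mul_zero]
      rw [h1, h2]; ring
    · by_cases ha : actObs M p a₀ y = 0
      · have h1 : obsProb M σ p (y :: t) = 0 := Finset.sum_eq_zero fun x _ => by
          rw [joint, condDist_cons_of_ne M σ x h0 y ht, ← mul_assoc,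
            actObs_eq_zero hM hp ha x, zero_mul]
        rw [h1, ha]; ring
      · have hjoint : ∀ x, joint M σ p x (y :: t) =
            actObs M p a₀ y * joint M (fun l => σ (y :: l)) (bayes M p a₀ y) x t := by
          intro x
          rw [joint, condDist_cons_of_ne M σ x h0 y ht, joint]
          show p x * (M a₀ x y * condDist M (fun l => σ (y :: l)) x t) =
            actObs M p a₀ y * (p x * M a₀ x y / actObs M p a₀ y *
              condDist M (fun l => σ (y :: l)) x t)
          field_simp
        have hobs : obsProb M σ p (y :: t) =
            actObs M p a₀ y * obsProb M (fun l => σ (y :: l)) (bayes M p a₀ y) t := by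
          rw [obsProb, obsProb, Finset.mul_sum]
          exact Finset.sum_congr rfl fun x _ => hjoint x
        have hpost : post M σ p (y :: t) = post M (fun l => σ (y :: l)) (bayes M p a₀ y) t := by
          funext x
          rw [post, post, hjoint x, hobs, mul_div_mul_left _ _ ha]
        rw [hobs, hpost]; ring
  · rw [if_neg hsy]
    have hnone : σ [y] = none := Option.not_isSome_iff_eq_none.1 hsy
    have hzero : ∀ t : List Y, t ≠ [] → obsProb M σ p (y :: t) = 0 := by
      intro t ht
      refine Finset.sum_eq_zero fun x _ => ?_
      rw [joint, condDist, if_neg, mul_zero]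
      rintro ⟨-, hs, -⟩
      rw [List.dropLast_cons_of_ne_nil ht] at hs
      exact hsy (hpc [y] (y :: t.dropLast) ⟨t.dropLast, rfl⟩ hs)
    rw [Finset.sum_eq_single ([] : List Y)]
    · have h1 : obsProb M σ p [y] = actObs M p a₀ y := by
        rw [obsProb, actObs]
        refine Finset.sum_congr rfl fun x _ => ?_
        rw [joint, condDist_single M σ x h0 y, if_pos hnone]
      have h2 : post M σ p [y] = bayes M p a₀ y := by
        funext x
        rw [post, joint, condDist_single M σ x h0 y, if_pos hnone, h1, bayes]
      rw [h1, h2]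
    · intro t _ ht
      rw [hzero t ht, zero_mul]
    · intro h
      exact absurd (mem_listsLE.2 (by simp)) h
lemma ofList_isSome_iff (as : List A) (ys : List Y) :
    ((ofList as : List Y → Option A) ys).isSome ↔ ys.length < as.length := by
  unfold ofList
  constructor
  · intro h
    by_contra hc
    rw [List.getElem?_eq_none (by omega)] at h
    simp at h
  · intro h
    rw [List.getElem?_eq_getElem h]
    rfl

lemma finiteStrategy_ofList_single (a : A) :
    FiniteStrategy (ofList [a] : List Y → Option A) := by
  refine ⟨by simp [ofList_isSome_iff], ?_, ?_⟩
  · intro l l' hpre hs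
    rw [ofList_isSome_iff] at hs ⊢
    have := hpre.length_le
    simp only [List.length_singleton] at hs ⊢
    omega
  · refine Set.Finite.subset (Set.finite_singleton ([] : List Y)) fun l hl => ?_
    rw [Set.mem_setOf_eq, ofList_isSome_iff] at hl
    simp only [List.length_singleton] at hl
    exact List.length_eq_zero_iff.1 (by omega)

lemma lenLE_ofList_single {l : ℕ} (hl : 1 ≤ l) (a : A) :
    ∀ ys : List Y, ((ofList [a] : List Y → Option A) ys).isSome → ys.length + 1 ≤ l := by
  intro ys h
  rw [ofList_isSome_iff] at h
  simp only [List.length_singleton] at h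
  omega

lemma condUncert_ofList_single [Fintype X] [Fintype Y] (U : (X → ℝ) → ℝ) (M : A → X → Y → ℝ)
    (hM : IsMechanism M) (a : A) (p : X → ℝ) (hp : ∀ x, 0 ≤ p x) :
    condUncert U M (ofList [a] : List Y → Option A) p =
      ∑ y : Y, actObs M p a y * U (bayes M p a y) := by
  rw [condUncert_rec U M hM _ a rfl (finiteStrategy_ofList_single a).2.1 0
    (lenLE_ofList_single le_rfl a) p hp]
  refine Finset.sum_congr rfl fun y _ => ?_
  rw [if_neg]
  rw [ofList_isSome_iff]
  simp

lemma leak_rec [Fintype X] [Fintype Y] (U : (X → ℝ) → ℝ) (M : A → X → Y → ℝ)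
    (hM : IsMechanism M) (σ : List Y → Option A) (a₀ : A) (h0 : σ [] = some a₀)
    (hpc : PrefixClosed σ) (n : ℕ) (hb : ∀ ys : List Y, (σ ys).isSome → ys.length + 1 ≤ n + 1)
    (p : X → ℝ) (hp : ∀ x, 0 ≤ p x) :
    leak U M σ p = leak U M (ofList [a₀] : List Y → Option A) p +
      ∑ y : Y, (if (σ [y]).isSome
        then actObs M p a₀ y * leak U M (fun t => σ (y :: t)) (bayes M p a₀ y) else 0) := by
  rw [leak, leak, condUncert_rec U M hM σ a₀ h0 hpc n hb p hp,
    condUncert_ofList_single U M hM a₀ p hp]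
  have key : ∀ y : Y,
      (if (σ [y]).isSome
        then actObs M p a₀ y * condUncert U M (fun t => σ (y :: t)) (bayes M p a₀ y)
        else actObs M p a₀ y * U (bayes M p a₀ y))
      = actObs M p a₀ y * U (bayes M p a₀ y) -
        (if (σ [y]).isSome
          then actObs M p a₀ y * leak U M (fun t => σ (y :: t)) (bayes M p a₀ y) else 0) := by
    intro y
    by_cases h : (σ [y]).isSome
    · rw [if_pos h, if_pos h, leak]; ring
    · rw [if_neg h, if_neg h]; ring
  rw [Finset.sum_congr rfl fun y _ => key y, Finset.sum_sub_distrib]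
  ring

lemma bayes_mem_simplex [Fintype X] [Fintype Y] {M : A → X → Y → ℝ} {p : X → ℝ}
    (hM : IsMechanism M) (hp : ∀ x, 0 ≤ p x) {a : A} {y : Y}
    (ha : actObs M p a y ≠ 0) : bayes M p a y ∈ stdSimplex ℝ X := by
  refine ⟨fun x => div_nonneg (mul_nonneg (hp x) ((hM a x).1 y)) (actObs_nonneg hM hp a y), ?_⟩
  show ∑ x : X, p x * M a x y / actObs M p a y = 1
  rw [← Finset.sum_div]
  exact div_self ha

lemma sum_actObs [Fintype X] [Fintype Y] {M : A → X → Y → ℝ} {p : X → ℝ}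
    (hM : IsMechanism M) (hp1 : ∑ x : X, p x = 1) (a : A) :
    ∑ y : Y, actObs M p a y = 1 := by
  unfold actObs
  rw [Finset.sum_comm]
  calc ∑ x : X, ∑ y : Y, p x * M a x y = ∑ x : X, p x * ∑ y : Y, M a x y := by
        refine Finset.sum_congr rfl fun x _ => ?_
        rw [Finset.mul_sum]
    _ = ∑ x : X, p x := by
        refine Finset.sum_congr rfl fun x _ => ?_
        rw [(hM a x).2, mul_one]
    _ = 1 := hp1

lemma leak_single_nonneg [Fintype X] [Fintype Y] (U : (X → ℝ) → ℝ) (M : A → X → Y → ℝ)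
    (hM : IsMechanism M) (hU : IsUncertainty U) (a : A) (p : X → ℝ)
    (hp : p ∈ stdSimplex ℝ X) :
    0 ≤ leak U M (ofList [a] : List Y → Option A) p := by
  classical
  rw [leak, condUncert_ofList_single U M hM a p hp.1, sub_nonneg]
  set t := Finset.univ.filter (fun y : Y => actObs M p a y ≠ 0) with ht
  have hmemt : ∀ y : Y, y ∈ t ↔ actObs M p a y ≠ 0 := by
    intro y; simp [ht]
  have hzero : ∀ y ∈ Finset.univ, y ∉ t → actObs M p a y * U (bayes M p a y) = 0 := by
    intro y _ hy
    rw [hmemt] at hy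
    push_neg at hy
    rw [hy, zero_mul]
  rw [← Finset.sum_subset t.subset_univ hzero]
  have hsum1 : ∑ y ∈ t, actObs M p a y = 1 := by
    rw [Finset.sum_subset t.subset_univ (fun y _ hy => by rw [hmemt] at hy; push_neg at hy; exact hy)]
    exact sum_actObs hM hp.2 a
  have hrepr : (∑ y ∈ t, actObs M p a y • bayes M p a y) = p := by
    funext x
    rw [Finset.sum_apply]
    have : ∀ y ∈ t, (actObs M p a y • bayes M p a y) x = p x * M a x y := by
      intro y hy
      rw [hmemt] at hy
      show actObs M p a y * (p x * M a x y / actObs M p a y) = _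
      field_simp
    rw [Finset.sum_congr rfl this,
      Finset.sum_subset t.subset_univ (fun y _ hy => by
        rw [hmemt] at hy; push_neg at hy; exact actObs_eq_zero hM hp.1 hy x),
      ← Finset.mul_sum, (hM a x).2, mul_one]
  have hjen := hU.1.le_map_sum (fun y (hy : y ∈ t) => actObs_nonneg hM hp.1 a y) hsum1
    (fun y hy => bayes_mem_simplex hM hp.1 ((hmemt y).1 hy))
  rw [hrepr] at hjen
  calc ∑ y ∈ t, actObs M p a y * U (bayes M p a y)
      = ∑ y ∈ t, actObs M p a y • U (bayes M p a y) := by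
        refine Finset.sum_congr rfl fun y _ => rfl
    _ ≤ U p := hjen
def leakSet [Fintype X] (U : (X → ℝ) → ℝ) (M : A → X → Y → ℝ) (p : X → ℝ) (l : ℕ) : Set ℝ :=
  {r : ℝ | ∃ σ : List Y → Option A,
    FiniteStrategy σ ∧ (∀ ys, (σ ys).isSome → ys.length + 1 ≤ l) ∧ r = leak U M σ p}

lemma maxLeak_eq_sSup [Fintype X] (U : (X → ℝ) → ℝ) (M : A → X → Y → ℝ) (p : X → ℝ) (l : ℕ) :
    maxLeak U M p l = sSup (leakSet U M p l) := rfl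

lemma leakSet_finite [Fintype X] [Fintype Y] [Fintype A] (U : (X → ℝ) → ℝ) (M : A → X → Y → ℝ)
    (p : X → ℝ) (l : ℕ) : (leakSet U M p l).Finite := by
  classical
  set S0 : Set (List Y) := {ys : List Y | ys.length + 1 ≤ l} with hS0def
  have hS0 : S0.Finite :=
    (List.finite_length_le Y l).subset fun ys hy => by
      simp only [hS0def, Set.mem_setOf_eq] at hy ⊢
      omega
  haveI : Finite ↥S0 := hS0.to_subtype
  set T : Set (List Y → Option A) :=
    {σ : List Y → Option A | ∀ ys : List Y, ¬ ys.length + 1 ≤ l → σ ys = none} with hT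
  have hTfin : T.Finite := by
    have hinj : Set.InjOn (fun (σ : List Y → Option A) (s : ↥S0) => σ s.1) T := by
      intro σ hσ σ' hσ' h
      funext ys
      by_cases hy : ys.length + 1 ≤ l
      · exact congrFun h ⟨ys, hy⟩
      · rw [hσ ys hy, hσ' ys hy]
    haveI : Finite (Option A) := inferInstance
    haveI : Finite (↥S0 → Option A) := Pi.finite
    exact Set.Finite.of_finite_image (Set.toFinite _) hinj
  refine (hTfin.image (fun σ => leak U M σ p)).subset ?_
  rintro r ⟨σ, hFS, hbd, rfl⟩
  refine ⟨σ, ?_, rfl⟩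
  intro ys hy
  by_contra hne
  exact hy (hbd ys (Option.ne_none_iff_isSome.1 hne))

lemma leakSet_nonempty [Fintype X] [Fintype Y] [Nonempty A] (U : (X → ℝ) → ℝ)
    (M : A → X → Y → ℝ) (p : X → ℝ) {l : ℕ} (hl : 1 ≤ l) :
    (leakSet U M p l).Nonempty := by
  obtain ⟨a⟩ := ‹Nonempty A›
  exact ⟨_, (ofList [a] : List Y → Option A), finiteStrategy_ofList_single a,
    lenLE_ofList_single hl a, rfl⟩

lemma maxLeak_zero [Fintype X] (U : (X → ℝ) → ℝ) (M : A → X → Y → ℝ) (p : X → ℝ) :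
    maxLeak U M p 0 = 0 := by
  rw [maxLeak_eq_sSup]
  have : leakSet U M p 0 = (∅ : Set ℝ) := by
    rw [Set.eq_empty_iff_forall_notMem]
    rintro r ⟨σ, hFS, hbd, -⟩
    exact absurd (hbd [] hFS.1) (by omega)
  rw [this]
  exact Real.sSup_empty

lemma deriv_finiteStrategy {σ : List Y → Option A} (hσ : FiniteStrategy σ) {y : Y}
    (hy : (σ [y]).isSome) : FiniteStrategy (fun t => σ (y :: t)) := by
  refine ⟨hy, ?_, ?_⟩
  · intro t t' hpre hs
    exact hσ.2.1 (y :: t) (y :: t') (List.cons_prefix_cons.2 ⟨rfl, hpre⟩) hs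
  · have he : {t : List Y | (σ (y :: t)).isSome} =
        (fun t : List Y => y :: t) ⁻¹' {ys : List Y | (σ ys).isSome} := rfl
    rw [he]
    exact hσ.2.2.preimage fun a _ b _ h => List.cons_injective h

def compStrat (a : A) (τ : Y → List Y → Option A) : List Y → Option A
  | [] => some a
  | y :: t => τ y t

lemma compStrat_finite [Finite Y] (a : A) (τ : Y → List Y → Option A)
    (hτ : ∀ y, FiniteStrategy (τ y)) : FiniteStrategy (compStrat a τ) := by
  refine ⟨rfl, ?_, ?_⟩
  · intro l l' hpre hs
    cases l with
    | nil => rfl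
    | cons y t =>
      cases l' with
      | nil => exact absurd hpre.length_le (by simp)
      | cons y' t' =>
        obtain ⟨rfl, ht⟩ := List.cons_prefix_cons.1 hpre
        exact (hτ y).2.1 t t' ht hs
  · refine Set.Finite.subset (Set.Finite.union (Set.finite_singleton ([] : List Y))
      (Set.finite_iUnion fun y : Y =>
        ((hτ y).2.2.image (fun t => y :: t)))) ?_
    intro ys hs
    cases ys with
    | nil => exact Or.inl rfl
    | cons y t => exact Or.inr (Set.mem_iUnion.2 ⟨y, ⟨t, hs, rfl⟩⟩)

/-- Corollary 6.2, Bellman equation: for `l ≥ 1`,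
`M_l(p) = max_a { I_{[a]}(S,p) + Σ_y p_a(y)·M_{l−1}(p^{ay}) }` (terms with `p_a(y)=0`
vanish), and the maximum is attained by an optimal strategy `σ*` of length at most `l`. -/
theorem bellman_equation
    [Fintype X] [Fintype Y] [Fintype A] [Nonempty X] [Nonempty Y] [Nonempty A]
    (M : A → X → Y → ℝ) (hM : IsMechanism M)
    (U : (X → ℝ) → ℝ) (hU : IsUncertainty U)
    (p : X → ℝ) (hp : p ∈ stdSimplex ℝ X)
    (l : ℕ) (hl : 1 ≤ l) :
    maxLeak U M p l =
        Finset.univ.sup' Finset.univ_nonempty (fun a : A =>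
          leak U M (ofList [a] : List Y → Option A) p +
            ∑ y : Y, actObs M p a y * maxLeak U M (bayes M p a y) (l - 1)) ∧
      ∃ σ : List Y → Option A,
        FiniteStrategy σ ∧ (∀ ys, (σ ys).isSome → ys.length + 1 ≤ l) ∧
          leak U M σ p = maxLeak U M p l := by
  classical
  obtain ⟨n, rfl⟩ : ∃ n, l = n + 1 := ⟨l - 1, by omega⟩
  simp only [Nat.add_sub_cancel]
  have hpn : ∀ x, 0 ≤ p x := hp.1
  have hfin := leakSet_finite U M p (n + 1)
  have hne : (leakSet U M p (n + 1)).Nonempty := leakSet_nonempty U M p (by omega)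
  obtain ⟨σ₀, hFS₀, hbd₀, hval₀⟩ := hne.csSup_mem hfin
  have hmax : maxLeak U M p (n + 1) = leak U M σ₀ p := by
    rw [maxLeak_eq_sSup]; exact hval₀
  refine ⟨le_antisymm ?_ ?_, σ₀, hFS₀, hbd₀, hmax.symm⟩
  · obtain ⟨a₀, h0⟩ := Option.isSome_iff_exists.1 hFS₀.1
    rw [hmax, leak_rec U M hM σ₀ a₀ h0 hFS₀.2.1 n hbd₀ p hpn]
    refine le_trans ?_ (Finset.le_sup' _ (Finset.mem_univ a₀))
    refine add_le_add (le_refl _) (Finset.sum_le_sum fun y _ => ?_)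
    by_cases hsy : (σ₀ [y]).isSome
    · rw [if_pos hsy]
      refine mul_le_mul_of_nonneg_left ?_ (actObs_nonneg hM hpn a₀ y)
      rw [maxLeak_eq_sSup]
      refine le_csSup (leakSet_finite U M _ n).bddAbove ?_
      refine ⟨fun t => σ₀ (y :: t), deriv_finiteStrategy hFS₀ hsy, ?_, rfl⟩
      intro t ht
      have := hbd₀ (y :: t) ht
      simp only [List.length_cons] at this
      omega
    · rw [if_neg hsy]
      rcases eq_or_lt_of_le (actObs_nonneg hM hpn a₀ y) with h | h
      · rw [← h, zero_mul]
      · refine mul_nonneg h.le ?_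
        rcases Nat.eq_zero_or_pos n with hn | hn
        · rw [hn, maxLeak_zero]
        · have hbmem : bayes M p a₀ y ∈ stdSimplex ℝ X :=
            bayes_mem_simplex hM hpn (ne_of_gt h)
          refine le_trans (leak_single_nonneg U M hM hU a₀ _ hbmem) ?_
          rw [maxLeak_eq_sSup]
          exact le_csSup (leakSet_finite U M _ n).bddAbove
            ⟨ofList [a₀], finiteStrategy_ofList_single a₀, lenLE_ofList_single hn a₀, rfl⟩
  · refine Finset.sup'_le _ _ fun a _ => ?_
    rw [maxLeak_eq_sSup]
    refine le_csSup hfin.bddAbove ?_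
    rcases Nat.eq_zero_or_pos n with hn | hn
    · subst hn
      refine ⟨ofList [a], finiteStrategy_ofList_single a, lenLE_ofList_single le_rfl a, ?_⟩
      simp only [maxLeak_zero, mul_zero, Finset.sum_const_zero, add_zero]
    · have hopt : ∀ y : Y, ∃ τ : List Y → Option A, FiniteStrategy τ ∧
          (∀ ys : List Y, (τ ys).isSome → ys.length + 1 ≤ n) ∧
          (actObs M p a y ≠ 0 →
            leak U M τ (bayes M p a y) = maxLeak U M (bayes M p a y) n) := by
        intro y
        obtain ⟨σy, h1, h2, h3⟩ :=
          (leakSet_nonempty U M (bayes M p a y) hn).csSup_mem (leakSet_finite U M _ n)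
        exact ⟨σy, h1, h2, fun _ => by rw [maxLeak_eq_sSup]; exact h3.symm⟩
      choose τ hτFS hτbd hτval using hopt
      have hbd' : ∀ ys : List Y, ((compStrat a τ) ys).isSome → ys.length + 1 ≤ n + 1 := by
        intro ys hys
        cases ys with
        | nil => simp only [List.length_nil]; omega
        | cons y t =>
          have := hτbd y t hys
          simp only [List.length_cons]
          omega
      refine ⟨compStrat a τ, compStrat_finite a τ hτFS, hbd', ?_⟩
      rw [leak_rec U M hM (compStrat a τ) a rfl (compStrat_finite a τ hτFS).2.1 n hbd' p hpn]
      congr 1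
      refine Finset.sum_congr rfl fun y _ => ?_
      rw [if_pos (show ((compStrat a τ) [y]).isSome from (hτFS y).1)]
      have hderiv : (fun t => compStrat a τ (y :: t)) = τ y := rfl
      rw [hderiv]
      by_cases h : actObs M p a y = 0
      · rw [h, zero_mul, zero_mul]
      · rw [hτval y h]


end
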